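/- In the baseline interference-limited PPP network with α = 4, the coverage probability of the nearest-transmitter-associated user is p(θ) = 1/(1 + √θ·arctan√θ), independent of the intensity λ. -/

import Mathlib

open Real MeasureTheory

open Filter in
lemma integral_mul_exp_neg_mul_sq_Ioi {b : ℝ} (hb : 0 < b) :
    ∫ r in Set.Ioi (0 : ℝ), r * exp (-b * r ^ 2) = (2 * b)⁻¹ := by
  have hb' : b ≠ 0 := ne_of_gt hb
  have A : ∀ x : ℝ, HasDerivAt (fun x => -(2 * b)⁻¹ * exp (-b * x ^ 2))
      (x * exp (-b * x ^ 2)) x := by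
    intro x
    convert ((hasDerivAt_pow 2 x).const_mul (-b)).exp.const_mul (-(2 * b)⁻¹) using 1
    · rfl
    · rfl
    field_simp
    ring
  have B : Tendsto (fun y : ℝ ↦ -(2 * b)⁻¹ * exp (-b * y ^ 2))
      atTop (nhds (-(2 * b)⁻¹ * 0)) := by
    refine Tendsto.const_mul _ ?_
    exact Real.tendsto_exp_atBot.comp
      ((tendsto_pow_atTop two_ne_zero).const_mul_atTop_of_neg (neg_lt_zero.2 hb))
  have hint : IntegrableOn (fun x : ℝ => x * exp (-b * x ^ 2)) (Set.Ioi 0) := by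
    have := integrable_rpow_mul_exp_neg_mul_sq hb (s := 1) (by norm_num)
    simpa [Real.rpow_one] using this.integrableOn
  convert MeasureTheory.integral_Ioi_of_hasDerivAt_of_tendsto' (fun x _ => A x) hint B using 1
  simp

theorem baseline_coverage (lam θ : ℝ) (hlam : 0 < lam) (hθ : 0 ≤ θ) :
    (∫ r in Set.Ioi (0 : ℝ),
        2 * π * lam * r *
          exp (-π * lam * r ^ 2 * (1 + Real.sqrt θ * Real.arctan (Real.sqrt θ)))) =
      1 / (1 + Real.sqrt θ * Real.arctan (Real.sqrt θ)) := by
  set c : ℝ := 1 + Real.sqrt θ * Real.arctan (Real.sqrt θ) with hc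
  have hcpos : 0 < c := by
    have h1 : 0 ≤ Real.sqrt θ := Real.sqrt_nonneg θ
    have h2 : 0 ≤ Real.arctan (Real.sqrt θ) := by simpa using Real.arctan_strictMono.monotone h1
    nlinarith
  have hb : 0 < π * lam * c := by positivity
  have key := integral_mul_exp_neg_mul_sq_Ioi hb
  calc (∫ r in Set.Ioi (0 : ℝ), 2 * π * lam * r * exp (-π * lam * r ^ 2 * c))
      = 2 * π * lam * ∫ r in Set.Ioi (0 : ℝ), r * exp (-(π * lam * c) * r ^ 2) := by
        rw [← integral_const_mul]
        congr 1
        ext r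
        ring_nf
    _ = 2 * π * lam * (2 * (π * lam * c))⁻¹ := by rw [key]
    _ = 1 / c := by
        field_simp
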